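/- Symmetric three states: let 0 < γ ≤ 1 and 0 ≤ θ < 2π/3, and let N be the 3×3 complex Hermitian matrix with diagonal entries 1 and N₁₂ = N₂₃ = N₃₁ = γ e^{iθ} (the other off-diagonal entries being the complex conjugates); assume N is positive definite, and take equal occurrence probabilities η_1 = η_2 = η_3 = 1/3. Then the maximum of (1/3)(x_1 + x_2 + x_3) over x ∈ ℝ³ with x_i ≥ 0 for all i and N − diag(x) positive semidefinite equals 1 + 2γ cos(θ + 2π/3), and it is attained at x_1 = x_2 = x_3 = 1 + 2γ cos(θ + 2π/3). -/

import Mathlib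

open ComplexOrder

set_option maxHeartbeats 1000000 in
/-- Symmetric three states: all mutual inner products equal `γ e^{iθ}` and the
occurrence probabilities are equal. The maximum success probability of
unambiguous discrimination is `1 + 2γ cos(θ + 2π/3)`, attained at
`x₁ = x₂ = x₃ = 1 + 2γ cos(θ + 2π/3)`. -/
theorem three_state_symmetric
    (γ θ : ℝ) (hγ0 : 0 < γ) (hγ1 : γ ≤ 1)
    (hθ0 : 0 ≤ θ) (hθ1 : θ < 2 * Real.pi / 3)
    (hN : (!![1, (γ : ℂ) * Complex.exp (θ * Complex.I),
              star ((γ : ℂ) * Complex.exp (θ * Complex.I));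
            star ((γ : ℂ) * Complex.exp (θ * Complex.I)), 1,
              (γ : ℂ) * Complex.exp (θ * Complex.I);
            (γ : ℂ) * Complex.exp (θ * Complex.I),
              star ((γ : ℂ) * Complex.exp (θ * Complex.I)), 1] :
      Matrix (Fin 3) (Fin 3) ℂ).PosDef) :
    IsGreatest {p : ℝ | ∃ x : Fin 3 → ℝ, (∀ i, 0 ≤ x i) ∧
        ((!![1, (γ : ℂ) * Complex.exp (θ * Complex.I),
              star ((γ : ℂ) * Complex.exp (θ * Complex.I));
            star ((γ : ℂ) * Complex.exp (θ * Complex.I)), 1,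
              (γ : ℂ) * Complex.exp (θ * Complex.I);
            (γ : ℂ) * Complex.exp (θ * Complex.I),
              star ((γ : ℂ) * Complex.exp (θ * Complex.I)), 1] :
          Matrix (Fin 3) (Fin 3) ℂ) -
          Matrix.diagonal (fun i => (x i : ℂ))).PosSemidef ∧
        p = (1 / 3) * (x 0 + x 1 + x 2)}
      (1 + 2 * γ * Real.cos (θ + 2 * Real.pi / 3)) ∧
    (0 ≤ 1 + 2 * γ * Real.cos (θ + 2 * Real.pi / 3) ∧
      ((!![1, (γ : ℂ) * Complex.exp (θ * Complex.I),
              star ((γ : ℂ) * Complex.exp (θ * Complex.I));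
            star ((γ : ℂ) * Complex.exp (θ * Complex.I)), 1,
              (γ : ℂ) * Complex.exp (θ * Complex.I);
            (γ : ℂ) * Complex.exp (θ * Complex.I),
              star ((γ : ℂ) * Complex.exp (θ * Complex.I)), 1] :
          Matrix (Fin 3) (Fin 3) ℂ) -
        Matrix.diagonal (fun _ =>
          ((1 + 2 * γ * Real.cos (θ + 2 * Real.pi / 3) : ℝ) : ℂ))).PosSemidef) := by
  have hπ : 0 < Real.pi := Real.pi_pos
  set s : ℝ := Real.sqrt 3 with hs_def
  have hs : s ^ 2 = 3 := Real.sq_sqrt (by norm_num)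
  have hs0 : 0 ≤ s := Real.sqrt_nonneg 3
  set N : Matrix (Fin 3) (Fin 3) ℂ :=
    !![1, (γ : ℂ) * Complex.exp (θ * Complex.I),
        star ((γ : ℂ) * Complex.exp (θ * Complex.I));
      star ((γ : ℂ) * Complex.exp (θ * Complex.I)), 1,
        (γ : ℂ) * Complex.exp (θ * Complex.I);
      (γ : ℂ) * Complex.exp (θ * Complex.I),
        star ((γ : ℂ) * Complex.exp (θ * Complex.I)), 1] with hN_def
  set m : ℝ := 1 + 2 * γ * Real.cos (θ + 2 * Real.pi / 3) with hm_def
  set v : Fin 3 → ℂ := ![(2:ℂ), -1 + (s : ℂ)*Complex.I, -1 - (s : ℂ)*Complex.I] with hv_def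
  have hE : Complex.exp (θ * Complex.I) = (Real.cos θ : ℂ) + (Real.sin θ:ℂ)*Complex.I := by
    rw [Complex.exp_mul_I]; simp [Complex.ofReal_cos, Complex.ofReal_sin]
  have hc : Real.cos (θ + 2*Real.pi/3) = -(1/2)*Real.cos θ - (s/2)*Real.sin θ := by
    rw [Real.cos_add]
    have h1 : Real.cos (2*Real.pi/3) = -(1/2) := by
      have : (2*Real.pi/3) = Real.pi - Real.pi/3 := by ring
      rw [this, Real.cos_pi_sub, Real.cos_pi_div_three]
    have h2 : Real.sin (2*Real.pi/3) = s/2 := by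
      have : (2*Real.pi/3) = Real.pi - Real.pi/3 := by ring
      rw [this, Real.sin_pi_sub, Real.sin_pi_div_three]
    rw [h1, h2]; ring
  -- quadratic form identity
  have hquad : ∀ x : Fin 3 → ℝ,
      dotProduct (star v) ((N - Matrix.diagonal (fun i => (x i : ℂ))).mulVec v)
        = ((4*(3*m - (x 0 + x 1 + x 2)) : ℝ) : ℂ) := by
    intro x
    rw [hm_def]
    simp only [hv_def, hN_def, dotProduct, Matrix.mulVec, Fin.sum_univ_three, hE, hc,
      Matrix.sub_apply, Matrix.diagonal_apply, Fin.isValue, Matrix.cons_val', Matrix.cons_val_zero,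
      Matrix.cons_val_one, Matrix.head_cons, Matrix.empty_val', Matrix.cons_val_fin_one,
      Matrix.head_fin_const, Matrix.cons_val_two, Matrix.tail_cons, Matrix.of_apply,
      Pi.star_apply, if_true, if_false, star_add, star_sub, star_mul', Complex.conj_ofReal,
      Complex.conj_I, star_one, star_neg]
    simp [Complex.ext_iff]
    constructor
    · linear_combination ((1 - x 1) + (1 - x 2) - 2*γ*(Complex.cos (θ:ℂ)).re) * hs
    · linear_combination (0:ℝ) * hs
  have hv0 : v ≠ 0 := by
    intro h
    have := congrFun h 0
    simp [hv_def] at this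
  -- m is positive
  have hm0 : 0 < m := by
    have h1 := hN.dotProduct_mulVec_pos hv0
    have h2 : N - Matrix.diagonal (fun i => (((fun _ => (0:ℝ)) i : ℝ) : ℂ)) = N := by
      simp
    have h3 := hquad (fun _ => 0)
    rw [h2] at h3
    rw [h3] at h1
    have h4 : (0:ℝ) < 4*(3*m - (0 + 0 + 0)) := Complex.zero_lt_real.mp h1
    linarith
  -- sin θ is nonneg
  have hθπ : θ ≤ Real.pi := by nlinarith
  have hsin : 0 ≤ Real.sin θ := Real.sin_nonneg_of_nonneg_of_le_pi hθ0 hθπ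
  -- α and β
  have hα : 0 ≤ 3*γ*Real.cos θ + s*γ*Real.sin θ := by
    have h1 : 0 ≤ Real.sin (θ + Real.pi/3) :=
      Real.sin_nonneg_of_nonneg_of_le_pi (by linarith) (by linarith)
    have h2 : 3*γ*Real.cos θ + s*γ*Real.sin θ = 2*s*γ*Real.sin (θ + Real.pi/3) := by
      rw [Real.sin_add, Real.sin_pi_div_three, Real.cos_pi_div_three]
      linear_combination (-(γ * Real.cos θ)) * hs
    rw [h2]
    have : 0 ≤ 2*s*γ := by positivity
    exact mul_nonneg this h1
  have hβ : 0 ≤ 2*s*γ*Real.sin θ := by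
    have : 0 ≤ 2*s*γ := by positivity
    exact mul_nonneg this hsin
  -- square roots
  set a : ℝ := Real.sqrt ((3*γ*Real.cos θ + s*γ*Real.sin θ)/3) with ha_def
  set d : ℝ := Real.sqrt ((2*s*γ*Real.sin θ)/12) with hd_def
  have ha : a*a = (3*γ*Real.cos θ + s*γ*Real.sin θ)/3 :=
    Real.mul_self_sqrt (by linarith)
  have hd : d*d = (2*s*γ*Real.sin θ)/12 :=
    Real.mul_self_sqrt (by linarith)
  set A : Matrix (Fin 2) (Fin 3) ℂ :=
    !![(a:ℂ), (a:ℂ), (a:ℂ);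
       (d:ℂ)*2, (d:ℂ)*(-1 + (s:ℂ)*Complex.I), (d:ℂ)*(-1 - (s:ℂ)*Complex.I)] with hA_def
  have key : N - Matrix.diagonal (fun _ => ((m:ℝ) : ℂ)) = A.conjTranspose * A := by
    rw [hm_def]
    ext i j
    fin_cases i <;> fin_cases j <;>
    · simp only [hA_def, hN_def, Matrix.mul_apply, Fin.sum_univ_two, hE, hc,
        Matrix.sub_apply, Matrix.diagonal_apply, Fin.isValue, Matrix.cons_val', Matrix.cons_val_zero,
        Matrix.cons_val_one, Matrix.head_cons, Matrix.empty_val', Matrix.cons_val_fin_one,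
        Matrix.head_fin_const, Matrix.cons_val_two, Matrix.tail_cons, Matrix.of_apply,
        Matrix.conjTranspose_apply, Pi.star_apply, if_true, if_false, star_add, star_sub,
        star_mul', Complex.conj_ofReal, Complex.conj_I, star_one, star_neg]
      simp [Complex.ext_iff, Complex.cos_ofReal_re, Complex.sin_ofReal_re,
        Complex.cos_ofReal_im, Complex.sin_ofReal_im]
      first
        | (constructor <;>
            first
              | linear_combination ha + 4*hd
              | linear_combination -(ha + 4*hd)
              | linear_combination ha - 2*hd
              | linear_combination -(ha - 2*hd)
              | linear_combination 2*s*hd + (γ*Real.sin θ/3)*hs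
              | linear_combination -(2*s*hd + (γ*Real.sin θ/3)*hs)
              | linear_combination ha + (s^2+1)*hd + (s*γ*Real.sin θ/6)*hs
              | linear_combination -(ha + (s^2+1)*hd + (s*γ*Real.sin θ/6)*hs)
              | linear_combination ha + (1-s^2)*hd - (s*γ*Real.sin θ/6)*hs
              | linear_combination -(ha + (1-s^2)*hd - (s*γ*Real.sin θ/6)*hs)
              | ring)
        | linear_combination ha + 4*hd
        | linear_combination -(ha + 4*hd)
        | linear_combination ha - 2*hd
        | linear_combination -(ha - 2*hd)
        | linear_combination 2*s*hd + (γ*Real.sin θ/3)*hs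
        | linear_combination -(2*s*hd + (γ*Real.sin θ/3)*hs)
        | linear_combination ha + (s^2+1)*hd + (s*γ*Real.sin θ/6)*hs
        | linear_combination -(ha + (s^2+1)*hd + (s*γ*Real.sin θ/6)*hs)
        | linear_combination ha + (1-s^2)*hd - (s*γ*Real.sin θ/6)*hs
        | linear_combination -(ha + (1-s^2)*hd - (s*γ*Real.sin θ/6)*hs)
        | ring
  have hPSD : (N - Matrix.diagonal (fun _ => ((m:ℝ) : ℂ))).PosSemidef := by
    rw [key]; exact Matrix.posSemidef_conjTranspose_mul_self A
  refine ⟨⟨⟨fun _ => m, fun i => le_of_lt hm0, hPSD, by ring⟩, ?_⟩, le_of_lt hm0, hPSD⟩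
  rintro p ⟨x, hx0, hxPSD, rfl⟩
  have h1 := hxPSD.dotProduct_mulVec_nonneg v
  rw [hquad x] at h1
  have h2 : (0:ℝ) ≤ 4*(3*m - (x 0 + x 1 + x 2)) := Complex.zero_le_real.mp h1
  have h3 : x 0 + x 1 + x 2 ≤ 3*m := by linarith
  clear_value m s
  linarith
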